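/- arXiv:1301.0237 — 3 statements merged into one kernel-verified Lean document; each statement's English description precedes it below -/
import Mathlib

section
/- Let Ω be the closed unit disk in ℝ², let λ > 0, let 0 < α ≤ 1, and let ν_α := (1−α)·(dx/π restricted to Ω) + α·(dσ/(2π) on ∂Ω). Define K_b(m, ν_α) := sup_{x ∈ Ω} Σ_{j=−m}^{m} |b_{λ,j}(x)|² / ‖b_{λ,j}‖²_{L²(ν_α)}. Then there exists a constant C (depending on λ and α) such that for all sufficiently large m, K_b(m, ν_α) ≤ C + 2m/α. -/
open MeasureTheory Metric

/-- Bessel function of the first kind of nonnegative integer order. -/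
noncomputable def besselJnat (n : ℕ) (x : ℝ) : ℝ :=
  ∑' k : ℕ, ((-1 : ℝ) ^ k / ((Nat.factorial k : ℝ) * (Nat.factorial (n + k) : ℝ))) *
    (x / 2) ^ (n + 2 * k)

/-- Bessel function of the first kind of integer order, with `J_{-n} = (-1)^n J_n`. -/
noncomputable def besselJ (n : ℤ) (x : ℝ) : ℝ :=
  if 0 ≤ n then besselJnat n.toNat x else (-1 : ℝ) ^ n.natAbs * besselJnat n.natAbs x

/-- The Fourier-Bessel function `b_{λ,j}(x) = e^{ijθ} J_j(λ r)` on `ℝ² ≃ ℂ`. -/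
noncomputable def fourierBessel (lam : ℝ) (j : ℤ) (z : ℂ) : ℂ :=
  Complex.exp (Complex.I * j * z.arg) * besselJ j (lam * ‖z‖)

/-- Normalized uniform measure `dx/π` on the closed unit disk. -/
noncomputable def unifDisk : Measure ℂ :=
  (ENNReal.ofReal Real.pi)⁻¹ • (volume.restrict (closedBall (0 : ℂ) 1))

/-- Normalized arc-length measure `dσ/(2π)` on the unit circle. -/
noncomputable def circleUnif : Measure ℂ :=
  (ENNReal.ofReal (2 * Real.pi))⁻¹ •
    Measure.map (fun θ : ℝ => Complex.exp (θ * Complex.I))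
      (volume.restrict (Set.Ioc (0 : ℝ) (2 * Real.pi)))

/-- The mixed measure `ν_α = (1-α) dx/π + α dσ/(2π)`. -/
noncomputable def nuAlpha (a : ℝ) : Measure ℂ :=
  ENNReal.ofReal (1 - a) • unifDisk + ENNReal.ofReal a • circleUnif

/-- Squared `L²(ν)` norm of a function. -/
noncomputable def l2normSq (ν : Measure ℂ) (f : ℂ → ℂ) : ℝ :=
  ∫ z, ‖f z‖ ^ 2 ∂ν

/-- A measure on `ℂ` invariant under every rotation about the origin. -/
def RotationInvariant (ν : Measure ℂ) : Prop :=
  ∀ θ : ℝ, Measure.map (fun z : ℂ => Complex.exp (θ * Complex.I) * z) ν = ν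

/-- Plane wave `e^{i k·x}` with wave vector `k = λ(cos φ, sin φ)`. -/
noncomputable def planeWaveFn (lam phi : ℝ) (z : ℂ) : ℂ :=
  Complex.exp (Complex.I * ((lam * (Real.cos phi * z.re + Real.sin phi * z.im) : ℝ) : ℂ))

/-- Angle `φ_l = 2πl/(2m+1)`. -/
noncomputable def phiAngle (m : ℕ) (l : ℤ) : ℝ := 2 * Real.pi * l / (2 * m + 1)

/-- Discretized plane-wave combination
`b_j^m = (1/((2m+1) i^j)) Σ_{l=-m}^m e^{ijφ_l} e_{k_l}`. -/
noncomputable def pwave (lam : ℝ) (m : ℕ) (j : ℤ) (z : ℂ) : ℂ :=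
  (1 / (((2 * m + 1 : ℕ) : ℂ) * Complex.I ^ j)) *
    ∑ l ∈ Finset.Icc (-(m : ℤ)) (m : ℤ),
      Complex.exp (Complex.I * j * ((phiAngle m l : ℝ) : ℂ)) * planeWaveFn lam (phiAngle m l) z

/-- The quantity `K(V_m^b, ν)` for the Fourier-Bessel space on the unit disk. -/
noncomputable def Kb (lam : ℝ) (ν : Measure ℂ) (m : ℕ) : ℝ :=
  ⨆ z : closedBall (0 : ℂ) 1,
    ∑ j ∈ Finset.Icc (-(m : ℤ)) (m : ℤ),
      ‖fourierBessel lam j ↑z‖ ^ 2 / l2normSq ν (fourierBessel lam j)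

/-- The quantity `K(V_m^e, ν)` for the plane-wave space on the unit disk. -/
noncomputable def Ke (lam : ℝ) (ν : Measure ℂ) (m : ℕ) : ℝ :=
  ⨆ z : closedBall (0 : ℂ) 1,
    ∑ j ∈ Finset.Icc (-(m : ℤ)) (m : ℤ),
      ‖pwave lam m j ↑z‖ ^ 2 / l2normSq ν (pwave lam m j)

/-- Laplacian of a function on `ℝ² ≃ ℂ`. -/
noncomputable def laplacian2 (u : ℂ → ℂ) (z : ℂ) : ℂ :=
  fderiv ℝ (fun w => fderiv ℝ u w 1) z 1 + fderiv ℝ (fun w => fderiv ℝ u w Complex.I) z Complex.I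

noncomputable def bterm (n : ℕ) (t : ℝ) (k : ℕ) : ℝ :=
  ((-1 : ℝ) ^ k / ((Nat.factorial k : ℝ) * (Nat.factorial (n + k) : ℝ))) * (t / 2) ^ (n + 2 * k)

lemma besselJnat_eq (n : ℕ) (t : ℝ) : besselJnat n t = ∑' k, bterm n t k := rfl

lemma abs_bterm (n : ℕ) (t : ℝ) (k : ℕ) :
    |bterm n t k| = (|t| / 2) ^ (n + 2 * k) * (1 / ((Nat.factorial k : ℝ) * (Nat.factorial (n + k) : ℝ))) := by
  unfold bterm
  rw [abs_mul, abs_div, abs_pow, abs_neg, abs_one, one_pow, abs_mul, abs_pow, abs_div]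
  simp [Nat.abs_cast, mul_comm]

lemma summable_abs_bterm (n : ℕ) (t : ℝ) : Summable (fun k => |bterm n t k|) := by
  apply Summable.of_nonneg_of_le (fun k => abs_nonneg _) (fun k => ?_)
    (((Real.summable_pow_div_factorial ((|t| / 2) ^ 2)).mul_left ((|t| / 2) ^ n)))
  rw [abs_bterm, pow_add, pow_mul]
  have h1 : (1 : ℝ) / ((Nat.factorial k : ℝ) * (Nat.factorial (n + k) : ℝ)) ≤ 1 / (Nat.factorial k : ℝ) := by
    apply div_le_div_of_nonneg_left one_pos.le (by positivity)
    have h2 : (1:ℝ) ≤ (Nat.factorial (n+k) : ℝ) := Nat.one_le_cast.mpr (Nat.one_le_iff_ne_zero.mpr (Nat.factorial_ne_zero (n + k)))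
    have h3 : (0:ℝ) < (Nat.factorial k : ℝ) := Nat.cast_pos.mpr (Nat.factorial_pos k)
    nlinarith
  calc (|t| / 2) ^ n * ((|t| / 2) ^ 2) ^ k * (1 / ((Nat.factorial k : ℝ) * (Nat.factorial (n + k) : ℝ)))
      ≤ (|t| / 2) ^ n * ((|t| / 2) ^ 2) ^ k * (1 / (Nat.factorial k : ℝ)) := by
        apply mul_le_mul_of_nonneg_left h1 (by positivity)
    _ = (|t| / 2) ^ n * (((|t| / 2) ^ 2) ^ k / (Nat.factorial k : ℝ)) := by ring

lemma summable_bterm (n : ℕ) (t : ℝ) : Summable (bterm n t) :=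
  (summable_abs_bterm n t).of_abs

noncomputable def Mb (n : ℕ) (L : ℝ) : ℝ := ∑' k, |bterm n L k|

lemma Mb_nonneg (n : ℕ) (L : ℝ) : 0 ≤ Mb n L := tsum_nonneg fun k => abs_nonneg _

lemma abs_besselJnat_le (n : ℕ) {t L : ℝ} (ht : 0 ≤ t) (htL : t ≤ L) :
    |besselJnat n t| ≤ Mb n L := by
  rw [besselJnat_eq]
  have h1 : |∑' k, bterm n t k| ≤ ∑' k, |bterm n t k| := by
    simpa [Real.norm_eq_abs] using
      norm_tsum_le_tsum_norm (f := bterm n t) (by simpa [Real.norm_eq_abs] using summable_abs_bterm n t)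
  have h2 : ∑' k, |bterm n t k| ≤ ∑' k, |bterm n L k| := by
    apply Summable.tsum_le_tsum _ (summable_abs_bterm n t) (summable_abs_bterm n L)
    intro k
    rw [abs_bterm, abs_bterm]
    apply mul_le_mul_of_nonneg_right _ (by positivity)
    apply pow_le_pow_left₀ (by positivity)
    rw [abs_of_nonneg ht, abs_of_nonneg (ht.trans htL)]
    linarith
  exact h1.trans h2

/-- `b^m - c^m ≥ m c^(m-1) (b-c)` essentially, packaged as needed. -/
lemma geom_lower {b c : ℝ} (hc : 0 ≤ c) (hcb : c ≤ b) (m : ℕ) :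
    (m : ℝ) * c ^ (m - 1) * (b - c) ≤ b ^ m - c ^ m := by
  rw [← geom_sum₂_mul b c m]
  apply mul_le_mul_of_nonneg_right _ (by linarith)
  calc (m : ℝ) * c ^ (m - 1) = ∑ _i ∈ Finset.range m, c ^ (m - 1) := by
        rw [Finset.sum_const, Finset.card_range, nsmul_eq_mul]
    _ ≤ ∑ i ∈ Finset.range m, b ^ i * c ^ (m - 1 - i) := by
        apply Finset.sum_le_sum
        intro i hi
        rw [Finset.mem_range] at hi
        have : c ^ (m - 1) = c ^ i * c ^ (m - 1 - i) := by
          rw [← pow_add]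
          congr 1
          omega
        rw [this]
        exact mul_le_mul_of_nonneg_right (pow_le_pow_left₀ hc hcb i) (by positivity)

lemma pow_step {Λ b c : ℝ} (hΛ : 0 ≤ Λ) (hc : 0 ≤ c) (hcb : c ≤ b) (hbΛ : b ≤ Λ)
    (m : ℕ) (hm : 2 ≤ m) :
    b ^ (m + 2) - c ^ (m + 2) ≤ 2 * Λ ^ 2 * (b ^ m - c ^ m) := by
  have hb : 0 ≤ b := hc.trans hcb
  have hbm : 0 ≤ b ^ m - c ^ m := by
    have := pow_le_pow_left₀ hc hcb m; linarith
  have h1 : b ^ 2 * (b ^ m - c ^ m) ≤ Λ ^ 2 * (b ^ m - c ^ m) :=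
    mul_le_mul_of_nonneg_right (by nlinarith) hbm
  have h2 : (b ^ 2 - c ^ 2) * c ^ m ≤ Λ ^ 2 * (b ^ m - c ^ m) := by
    have hg := geom_lower hc hcb m
    have hm1 : c ^ m = c * c ^ (m - 1) := by
      conv_lhs => rw [show m = 1 + (m - 1) by omega]
      rw [pow_add, pow_one]
    have hcΛ : c ≤ Λ := (hcb.trans hbΛ)
    have key : (b ^ 2 - c ^ 2) * c ^ m ≤ Λ ^ 2 * ((m : ℝ) * c ^ (m - 1) * (b - c)) := by
      rw [hm1]
      have hm2 : (2 : ℝ) ≤ (m : ℝ) := by exact_mod_cast hm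
      have e1 : (b ^ 2 - c ^ 2) * (c * c ^ (m - 1)) = ((b + c) * c) * (c ^ (m - 1) * (b - c)) := by
        ring
      rw [e1]
      have e2 : Λ ^ 2 * ((m:ℝ) * c ^ (m - 1) * (b - c)) = ((m:ℝ) * Λ ^ 2) * (c ^ (m - 1) * (b - c)) := by
        ring
      rw [e2]
      apply mul_le_mul_of_nonneg_right _ (mul_nonneg (by positivity) (by linarith))
      nlinarith
    refine key.trans ?_
    exact mul_le_mul_of_nonneg_left hg (by positivity)
  have e : b ^ (m + 2) - c ^ (m + 2) = b ^ 2 * (b ^ m - c ^ m) + (b ^ 2 - c ^ 2) * c ^ m := by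
    ring
  rw [e]; nlinarith

lemma besselJnat_sub_ge (L : ℝ) (hL : 0 < L) (n : ℕ) (hn2 : 2 ≤ n)
    (hq : 2 * L ^ 2 ≤ (n : ℝ) + 1) {x y : ℝ} (hy : 0 ≤ y) (hyx : y ≤ x) (hxL : x ≤ L) :
    ((x / 2) ^ n - (y / 2) ^ n) / (2 * (Nat.factorial n : ℝ)) ≤
      besselJnat n x - besselJnat n y := by
  set b : ℝ := x / 2 with hb
  set c : ℝ := y / 2 with hc
  have hc0 : 0 ≤ c := by positivity
  have hcb : c ≤ b := by rw [hb, hc]; linarith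
  have hbΛ : b ≤ L / 2 := by rw [hb]; linarith
  set d : ℕ → ℝ := fun k => b ^ (n + 2 * k) - c ^ (n + 2 * k) with hd
  have hd0 : ∀ k, 0 ≤ d k := fun k => by
    have := pow_le_pow_left₀ hc0 hcb (n + 2 * k); simp [hd]; linarith
  have hdk : ∀ k, d k ≤ (L ^ 2 / 2) ^ k * d 0 := by
    intro k
    induction k with
    | zero => simp
    | succ k ih =>
      have e : n + 2 * (k + 1) = (n + 2 * k) + 2 := by omega
      have step : d (k + 1) ≤ 2 * (L / 2) ^ 2 * d k := by
        simp only [hd, e]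
        exact pow_step (by positivity) hc0 hcb hbΛ (n + 2 * k) (by omega)
      have h2 : 2 * (L / 2) ^ 2 = L ^ 2 / 2 := by ring
      rw [h2] at step
      calc d (k + 1) ≤ L ^ 2 / 2 * d k := step
        _ ≤ L ^ 2 / 2 * ((L ^ 2 / 2) ^ k * d 0) :=
            mul_le_mul_of_nonneg_left ih (by positivity)
        _ = (L ^ 2 / 2) ^ (k + 1) * d 0 := by ring
  set g : ℕ → ℝ := fun k => bterm n x k - bterm n y k with hg
  have hgs : Summable g := (summable_bterm n x).sub (summable_bterm n y)
  have hgd : ∀ k, g k = ((-1 : ℝ) ^ k / ((Nat.factorial k : ℝ) * (Nat.factorial (n + k) : ℝ))) * d k := by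
    intro k
    simp only [hg, hd, bterm]
    ring
  have hsub : besselJnat n x - besselJnat n y = ∑' k, g k := by
    rw [besselJnat_eq, besselJnat_eq]
    exact (Summable.tsum_sub (summable_bterm n x) (summable_bterm n y)).symm
  have hsplit : ∑' k, g k = g 0 + ∑' k, g (k + 1) := Summable.tsum_eq_zero_add hgs
  have hg0 : g 0 = d 0 / (Nat.factorial n : ℝ) := by
    rw [hgd 0]
    simp [Nat.factorial]
    ring
  -- bound the tail
  have htail : ∀ k : ℕ, |g (k + 1)| ≤ (d 0 / (Nat.factorial n : ℝ)) * (1 / 4) ^ (k + 1) := by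
    intro k
    rw [hgd (k + 1), abs_mul, abs_div, abs_pow, abs_neg, abs_one, one_pow, abs_of_nonneg (hd0 _)]
    have hfac : (Nat.factorial n : ℝ) * ((n : ℝ) + 1) ^ (k + 1) ≤ (Nat.factorial (n + (k + 1)) : ℝ) := by
      exact_mod_cast Nat.factorial_mul_pow_le_factorial
    have hk1 : (1 : ℝ) ≤ (Nat.factorial (k + 1) : ℝ) :=
      Nat.one_le_cast.mpr (Nat.one_le_iff_ne_zero.mpr (Nat.factorial_ne_zero _))
    have habs : |(Nat.factorial (k + 1) : ℝ) * (Nat.factorial (n + (k + 1)) : ℝ)| =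
        (Nat.factorial (k + 1) : ℝ) * (Nat.factorial (n + (k + 1)) : ℝ) := abs_of_nonneg (by positivity)
    rw [habs]
    have hnfacpos : (0 : ℝ) < (Nat.factorial n : ℝ) := Nat.cast_pos.mpr (Nat.factorial_pos n)
    have hnp : (0 : ℝ) < (n : ℝ) + 1 := by positivity
    -- denominator lower bound
    have hden : (Nat.factorial n : ℝ) * ((n : ℝ) + 1) ^ (k + 1) ≤
        (Nat.factorial (k + 1) : ℝ) * (Nat.factorial (n + (k + 1)) : ℝ) := by
      have hp2 : (0:ℝ) < (Nat.factorial (n + (k + 1)) : ℝ) := Nat.cast_pos.mpr (Nat.factorial_pos (n + (k + 1)))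
      nlinarith [hfac, hk1, pow_pos hnp (k + 1)]
    have hq4 : (L ^ 2 / 2) / ((n : ℝ) + 1) ≤ 1 / 4 := by
      rw [div_le_div_iff₀ (by positivity) (by norm_num)]
      linarith
    have hqnn : 0 ≤ (L ^ 2 / 2) / ((n : ℝ) + 1) := by positivity
    calc 1 / ((Nat.factorial (k + 1) : ℝ) * (Nat.factorial (n + (k + 1)) : ℝ)) * d (k + 1)
        ≤ 1 / ((Nat.factorial n : ℝ) * ((n : ℝ) + 1) ^ (k + 1)) * ((L ^ 2 / 2) ^ (k + 1) * d 0) := by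
          apply mul_le_mul
          · apply div_le_div_of_nonneg_left one_pos.le (by positivity) hden
          · exact hdk (k + 1)
          · exact hd0 _
          · positivity
      _ = (d 0 / (Nat.factorial n : ℝ)) * ((L ^ 2 / 2) / ((n : ℝ) + 1)) ^ (k + 1) := by
          rw [div_pow, div_pow]
          have hnp1 : ((n : ℝ) + 1) ^ (k+1) ≠ 0 := by positivity
          have hnf : (Nat.factorial n : ℝ) ≠ 0 := by positivity
          simp only [div_eq_mul_inv, mul_inv, inv_pow, one_mul]
          ring_nf
          simp only [one_div]
          ac_rfl
      _ ≤ (d 0 / (Nat.factorial n : ℝ)) * (1 / 4) ^ (k + 1) := by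
          apply mul_le_mul_of_nonneg_left _ (div_nonneg (hd0 0) hnfacpos.le)
          exact pow_le_pow_left₀ hqnn hq4 (k + 1)
  have htails : Summable (fun k => g (k + 1)) := (summable_nat_add_iff 1).mpr hgs
  have htails' : Summable (fun k => |g (k + 1)|) := htails.abs
  have hgeo : Summable (fun k : ℕ => (d 0 / (Nat.factorial n : ℝ)) * (1 / 4) ^ (k + 1)) := by
    apply Summable.mul_left
    exact ((summable_geometric_of_lt_one (by norm_num) (by norm_num)).comp_injective (add_left_injective 1))
  have htsum : |∑' k, g (k + 1)| ≤ d 0 / (2 * (Nat.factorial n : ℝ)) := by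
    have h1 : |∑' k, g (k + 1)| ≤ ∑' k, |g (k + 1)| := by
      simpa [Real.norm_eq_abs] using
        norm_tsum_le_tsum_norm (f := fun k => g (k + 1)) (by simpa [Real.norm_eq_abs] using htails')
    have h2 : ∑' k, |g (k + 1)| ≤ ∑' k : ℕ, (d 0 / (Nat.factorial n : ℝ)) * (1 / 4) ^ (k + 1) :=
      Summable.tsum_le_tsum htail htails' hgeo
    have h3 : ∑' k : ℕ, (d 0 / (Nat.factorial n : ℝ)) * (1 / 4) ^ (k + 1) =
        (d 0 / (Nat.factorial n : ℝ)) * (1 / 3) := by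
      rw [tsum_mul_left]
      congr 1
      have : ∑' k : ℕ, ((1 : ℝ) / 4) ^ (k + 1) = (1 / 4) * ∑' k : ℕ, ((1 : ℝ) / 4) ^ k := by
        rw [← tsum_mul_left]
        congr 1; funext k; rw [pow_succ]; ring
      rw [this, tsum_geometric_of_lt_one (by norm_num) (by norm_num)]
      norm_num
    have hnfacpos : (0 : ℝ) < (Nat.factorial n : ℝ) := Nat.cast_pos.mpr (Nat.factorial_pos n)
    have hd00 : 0 ≤ d 0 := hd0 0
    calc |∑' k, g (k + 1)| ≤ (d 0 / (Nat.factorial n : ℝ)) * (1 / 3) := by linarith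
      _ = d 0 / (3 * (Nat.factorial n : ℝ)) := by ring
      _ ≤ d 0 / (2 * (Nat.factorial n : ℝ)) := by
          gcongr
          linarith
  have hd0n : d 0 = (x / 2) ^ n - (y / 2) ^ n := by simp [hd, hb, hc]
  have hnfacpos : (0 : ℝ) < (Nat.factorial n : ℝ) := Nat.cast_pos.mpr (Nat.factorial_pos n)
  have habs := abs_le.mp htsum
  rw [hsub, hsplit, hg0, ← hd0n]
  have : d 0 / (Nat.factorial n : ℝ) - d 0 / (2 * (Nat.factorial n : ℝ)) =
      d 0 / (2 * (Nat.factorial n : ℝ)) := by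
    field_simp
    ring
  linarith [habs.1, habs.2]

lemma besselJnat_zero_eq (n : ℕ) (hn : 1 ≤ n) : besselJnat n 0 = 0 := by
  rw [besselJnat_eq]
  have : ∀ k, bterm n 0 k = 0 := by
    intro k
    unfold bterm
    rw [zero_div, zero_pow (by omega)]
    ring
  simp [this]

lemma besselJnat_nonneg (L : ℝ) (hL : 0 < L) (n : ℕ) (hn2 : 2 ≤ n)
    (hq : 2 * L ^ 2 ≤ (n : ℝ) + 1) {t : ℝ} (ht : 0 ≤ t) (htL : t ≤ L) :
    0 ≤ besselJnat n t := by
  have h := besselJnat_sub_ge L hL n hn2 hq le_rfl ht htL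
  rw [besselJnat_zero_eq n (by omega)] at h
  have h2 : (0:ℝ) ≤ ((t / 2) ^ n - (0 / 2) ^ n) / (2 * (Nat.factorial n : ℝ)) := by
    rw [zero_div, zero_pow (by omega), sub_zero]
    exact div_nonneg (pow_nonneg (by linarith) n) (by positivity)
  linarith

lemma besselJnat_mono_up (L : ℝ) (hL : 0 < L) (n : ℕ) (hn2 : 2 ≤ n)
    (hq : 2 * L ^ 2 ≤ (n : ℝ) + 1) {t : ℝ} (ht : 0 ≤ t) (htL : t ≤ L) :
    besselJnat n t ≤ besselJnat n L := by
  have h := besselJnat_sub_ge L hL n hn2 hq ht htL le_rfl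
  have h2 : (0:ℝ) ≤ ((L / 2) ^ n - (t / 2) ^ n) / (2 * (Nat.factorial n : ℝ)) := by
    apply div_nonneg _ (by positivity)
    have := pow_le_pow_left₀ (by linarith : (0:ℝ) ≤ t/2) (by linarith : t/2 ≤ L/2) n
    linarith
  linarith

lemma besselJnat_pos (L : ℝ) (hL : 0 < L) (n : ℕ) (hn2 : 2 ≤ n)
    (hq : 2 * L ^ 2 ≤ (n : ℝ) + 1) : 0 < besselJnat n L := by
  have h := besselJnat_sub_ge L hL n hn2 hq le_rfl hL.le le_rfl
  rw [besselJnat_zero_eq n (by omega)] at h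
  have h2 : (0:ℝ) < ((L / 2) ^ n - (0 / 2) ^ n) / (2 * (Nat.factorial n : ℝ)) := by
    rw [zero_div, zero_pow (by omega), sub_zero]
    exact div_pos (pow_pos (by linarith) n) (by positivity)
  linarith

lemma measurable_besselJnat (n : ℕ) : Measurable (besselJnat n) := by
  have hmeas : ∀ N : ℕ, Measurable (fun x => ∑ k ∈ Finset.range N, bterm n x k) := by
    intro N
    apply Finset.measurable_sum
    intro k _
    unfold bterm
    exact (measurable_const.mul ((measurable_id.div_const 2).pow_const _))
  apply measurable_of_tendsto_metrizable hmeas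
  rw [tendsto_pi_nhds]
  intro x
  exact (summable_bterm n x).hasSum.tendsto_sum_nat


lemma besselJ_sq (j : ℤ) (t : ℝ) : besselJ j t ^ 2 = besselJnat j.natAbs t ^ 2 := by
  unfold besselJ
  split_ifs with h
  · have : j.toNat = j.natAbs := by omega
    rw [this]
  · rw [mul_pow, ← pow_mul, mul_comm j.natAbs 2, pow_mul, neg_one_sq, one_pow, one_mul]

lemma fb_sq (lam : ℝ) (j : ℤ) (z : ℂ) :
    ‖fourierBessel lam j z‖ ^ 2 = besselJnat j.natAbs (lam * ‖z‖) ^ 2 := by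
  unfold fourierBessel
  rw [norm_mul]
  have h1 : ‖Complex.exp (Complex.I * j * (z.arg : ℂ))‖ = 1 := by
    have e : Complex.I * j * (z.arg : ℂ) = (((j : ℝ) * z.arg : ℝ) : ℂ) * Complex.I := by
      push_cast
      ring
    rw [e, Complex.norm_exp_ofReal_mul_I]
  rw [h1, one_mul, Complex.norm_real, Real.norm_eq_abs, sq_abs, besselJ_sq]

lemma measurable_hTheta : Measurable (fun θ : ℝ => Complex.exp (θ * Complex.I)) :=
  (Complex.continuous_ofReal.mul continuous_const).cexp.measurable

lemma circleUnif_univ : circleUnif Set.univ = 1 := by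
  unfold circleUnif
  rw [Measure.smul_apply, Measure.map_apply measurable_hTheta MeasurableSet.univ]
  simp only [Set.preimage_univ, Measure.restrict_apply_univ, Real.volume_Ioc, sub_zero,
    smul_eq_mul]
  exact ENNReal.inv_mul_cancel (by simp [Real.pi_pos, Real.two_pi_pos]) ENNReal.ofReal_ne_top

instance : IsProbabilityMeasure circleUnif := ⟨circleUnif_univ⟩

lemma circle_abs_one : ∀ᵐ z ∂circleUnif, ‖z‖ = 1 := by
  rw [MeasureTheory.ae_iff]
  unfold circleUnif
  have hset : MeasurableSet {z : ℂ | ¬‖z‖ = 1} :=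
    ((isClosed_eq continuous_norm continuous_const).measurableSet).compl
  rw [Measure.smul_apply, Measure.map_apply measurable_hTheta hset]
  have : (fun θ : ℝ => Complex.exp (θ * Complex.I)) ⁻¹' {z : ℂ | ¬‖z‖ = 1} = ∅ := by
    ext θ
    simp [Complex.norm_exp_ofReal_mul_I]
  rw [this]
  simp

instance : IsFiniteMeasure unifDisk := by
  constructor
  unfold unifDisk
  rw [Measure.smul_apply, Measure.restrict_apply_univ, smul_eq_mul]
  exact ENNReal.mul_lt_top (ENNReal.inv_lt_top.mpr (by simp [Real.pi_pos]))
    (isCompact_closedBall (0 : ℂ) 1).measure_lt_top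

lemma measurable_gfun (lam : ℝ) (n : ℕ) :
    Measurable (fun z : ℂ => besselJnat n (lam * ‖z‖) ^ 2) :=
  ((measurable_besselJnat n).comp (measurable_const.mul continuous_norm.measurable)).pow_const 2

lemma integrable_g_unifDisk (lam : ℝ) (hlam : 0 < lam) (n : ℕ) :
    Integrable (fun z : ℂ => besselJnat n (lam * ‖z‖) ^ 2) unifDisk := by
  refine ⟨(measurable_gfun lam n).aestronglyMeasurable, ?_⟩
  apply MeasureTheory.HasFiniteIntegral.of_bounded (C := (Mb n lam) ^ 2)
  unfold unifDisk
  have hb1 : ∀ᵐ z ∂(volume.restrict (closedBall (0:ℂ) 1)),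
      ‖besselJnat n (lam * ‖z‖) ^ 2‖ ≤ (Mb n lam) ^ 2 := by
    rw [ae_restrict_iff' measurableSet_closedBall]
    apply ae_of_all
    intro z hz
    have habs : ‖z‖ ≤ 1 := by
      simpa using mem_closedBall_zero_iff.mp hz
    have ht0 : 0 ≤ lam * ‖z‖ := by positivity
    have htL : lam * ‖z‖ ≤ lam := by
      nlinarith [norm_nonneg z]
    have hb := abs_besselJnat_le n ht0 htL
    rw [Real.norm_eq_abs, abs_pow]
    exact pow_le_pow_left₀ (abs_nonneg _) hb 2
  exact Measure.ae_smul_measure hb1 _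

lemma integral_g_circle (lam : ℝ) (n : ℕ) :
    ∫ z, besselJnat n (lam * ‖z‖) ^ 2 ∂circleUnif = besselJnat n lam ^ 2 := by
  have hae : (fun z : ℂ => besselJnat n (lam * ‖z‖) ^ 2) =ᵐ[circleUnif]
      (fun _ => besselJnat n lam ^ 2) := by
    filter_upwards [circle_abs_one] with z hz
    rw [hz, mul_one]
  rw [integral_congr_ae hae, integral_const]
  simp

lemma integrable_g_circle (lam : ℝ) (n : ℕ) :
    Integrable (fun z : ℂ => besselJnat n (lam * ‖z‖) ^ 2) circleUnif := by
  have hae : (fun z : ℂ => besselJnat n (lam * ‖z‖) ^ 2) =ᵐ[circleUnif]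
      (fun _ => besselJnat n lam ^ 2) := by
    filter_upwards [circle_abs_one] with z hz
    rw [hz, mul_one]
  exact (integrable_const _).congr hae.symm

lemma l2_lower (lam : ℝ) (hlam : 0 < lam) (a : ℝ) (ha0 : 0 ≤ a) (ha1 : a ≤ 1) (j : ℤ) :
    a * besselJnat j.natAbs lam ^ 2 ≤ l2normSq (nuAlpha a) (fourierBessel lam j) := by
  set n := j.natAbs
  have hfg : (fun z => ‖fourierBessel lam j z‖ ^ 2) =
      fun z => besselJnat n (lam * ‖z‖) ^ 2 := funext (fb_sq lam j)
  unfold l2normSq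
  rw [hfg]
  unfold nuAlpha
  rw [integral_add_measure ((integrable_g_unifDisk lam hlam n).smul_measure ENNReal.ofReal_ne_top)
    ((integrable_g_circle lam n).smul_measure ENNReal.ofReal_ne_top),
    integral_smul_measure, integral_smul_measure,
    ENNReal.toReal_ofReal (by linarith), ENNReal.toReal_ofReal ha0,
    integral_g_circle lam n]
  have hd : 0 ≤ ∫ z, besselJnat n (lam * ‖z‖) ^ 2 ∂unifDisk :=
    integral_nonneg (fun z => sq_nonneg _)
  rw [smul_eq_mul, smul_eq_mul]
  nlinarith

noncomputable def n0 (lam : ℝ) : ℕ := max 2 ⌈2 * lam ^ 2⌉₊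

noncomputable def Cconst (lam a : ℝ) : ℝ :=
  ∑ j ∈ Finset.Icc (-(n0 lam : ℤ) + 1) ((n0 lam : ℤ) - 1),
    (Mb j.natAbs lam) ^ 2 / l2normSq (nuAlpha a) (fourierBessel lam j)

lemma l2_nonneg (ν : Measure ℂ) (f : ℂ → ℂ) : 0 ≤ l2normSq ν f :=
  integral_nonneg fun z => pow_nonneg (norm_nonneg _) 2

lemma sum_bound (lam : ℝ) (hlam : 0 < lam) (a : ℝ) (ha0 : 0 < a) (ha1 : a ≤ 1)
    (m : ℕ) (z : ℂ) (hz : ‖z‖ ≤ 1) :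
    ∑ j ∈ Finset.Icc (-(m : ℤ)) (m : ℤ),
      ‖fourierBessel lam j z‖ ^ 2 / l2normSq (nuAlpha a) (fourierBessel lam j) ≤
      Cconst lam a + 2 * (m : ℝ) / a := by
  simp only [fb_sq]
  set N : ℤ → ℝ := fun j => l2normSq (nuAlpha a) (fourierBessel lam j) with hN
  have hNnn : ∀ j, 0 ≤ N j := fun j => l2_nonneg _ _
  set t : ℝ := lam * ‖z‖ with htdef
  have ht0 : 0 ≤ t := by positivity
  have htL : t ≤ lam := by
    rw [htdef]
    nlinarith [norm_nonneg z]
  set f : ℤ → ℝ := fun j => besselJnat j.natAbs t ^ 2 / N j with hf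
  set P : ℤ → Prop := fun j => n0 lam ≤ j.natAbs with hP
  have hsplit := Finset.sum_filter_add_sum_filter_not (Finset.Icc (-(m : ℤ)) (m : ℤ)) P f
  rw [← hsplit]
  have hlarge : ∀ j ∈ (Finset.Icc (-(m : ℤ)) (m : ℤ)).filter P, f j ≤ 1 / a := by
    intro j hj
    rw [Finset.mem_filter] at hj
    have hPj : n0 lam ≤ j.natAbs := hj.2
    have hn2 : 2 ≤ j.natAbs := le_trans (le_max_left _ _) hPj
    have hq : 2 * lam ^ 2 ≤ (j.natAbs : ℝ) + 1 := by
      have h1 : 2 * lam ^ 2 ≤ (⌈2 * lam ^ 2⌉₊ : ℝ) := Nat.le_ceil _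
      have h2 : (⌈2 * lam ^ 2⌉₊ : ℝ) ≤ (j.natAbs : ℝ) := by
        exact_mod_cast le_trans (le_max_right 2 _) hPj
      linarith
    have hpos := besselJnat_pos lam hlam j.natAbs hn2 hq
    have hmono := besselJnat_mono_up lam hlam j.natAbs hn2 hq ht0 htL
    have hnn := besselJnat_nonneg lam hlam j.natAbs hn2 hq ht0 htL
    have hnum : besselJnat j.natAbs t ^ 2 ≤ besselJnat j.natAbs lam ^ 2 :=
      pow_le_pow_left₀ hnn hmono 2
    have hden : a * besselJnat j.natAbs lam ^ 2 ≤ N j := l2_lower lam hlam a ha0.le ha1 j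
    have hdpos : 0 < a * besselJnat j.natAbs lam ^ 2 := by positivity
    have : f j ≤ besselJnat j.natAbs lam ^ 2 / (a * besselJnat j.natAbs lam ^ 2) :=
      div_le_div₀ (sq_nonneg _) hnum hdpos hden
    refine this.trans (le_of_eq ?_)
    field_simp
  have hsmall : ∀ j ∈ (Finset.Icc (-(m : ℤ)) (m : ℤ)).filter (fun j => ¬P j),
      f j ≤ (Mb j.natAbs lam) ^ 2 / N j := by
    intro j _
    have hnum : besselJnat j.natAbs t ^ 2 ≤ (Mb j.natAbs lam) ^ 2 := by
      rw [← sq_abs (besselJnat j.natAbs t)]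
      exact pow_le_pow_left₀ (abs_nonneg _) (abs_besselJnat_le j.natAbs ht0 htL) 2
    rcases (hNnn j).eq_or_lt with h0 | hpos
    · simp [hf, ← h0]
    · exact (div_le_div_iff_of_pos_right hpos).mpr hnum
  have hsum_small : ∑ j ∈ (Finset.Icc (-(m : ℤ)) (m : ℤ)).filter (fun j => ¬P j), f j ≤
      Cconst lam a := by
    refine le_trans (Finset.sum_le_sum hsmall) ?_
    apply Finset.sum_le_sum_of_subset_of_nonneg
    · intro j hj
      rw [Finset.mem_filter] at hj
      have h1 : j.natAbs < n0 lam := by omega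
      rw [Finset.mem_Icc]
      omega
    · intro j _ _
      exact div_nonneg (sq_nonneg _) (hNnn j)
  have hsum_large : ∑ j ∈ (Finset.Icc (-(m : ℤ)) (m : ℤ)).filter P, f j ≤ 2 * (m : ℝ) / a := by
    refine le_trans (Finset.sum_le_card_nsmul _ _ (1 / a) hlarge) ?_
    have hcard : ((Finset.Icc (-(m : ℤ)) (m : ℤ)).filter P).card ≤ 2 * m := by
      have hsub : (Finset.Icc (-(m : ℤ)) (m : ℤ)).filter P ⊆
          (Finset.Icc (-(m : ℤ)) (m : ℤ)).erase 0 := by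
        intro j hj
        rw [Finset.mem_filter] at hj
        rw [Finset.mem_erase]
        refine ⟨?_, hj.1⟩
        intro h0
        subst h0
        have h2 : (2:ℕ) ≤ n0 lam := le_max_left _ _
        have := hj.2
        simp [hP] at this
        omega
      refine le_trans (Finset.card_le_card hsub) ?_
      rw [Finset.card_erase_of_mem (by rw [Finset.mem_Icc]; omega), Int.card_Icc]
      omega
    rw [nsmul_eq_mul]
    calc (((Finset.Icc (-(m : ℤ)) (m : ℤ)).filter P).card : ℝ) * (1 / a) ≤
        (2 * (m : ℝ)) * (1 / a) := by
          apply mul_le_mul_of_nonneg_right _ (by positivity)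
          exact_mod_cast hcard
      _ = 2 * (m : ℝ) / a := by ring
  linarith


/-- For the Fourier-Bessel space `V_m^b` and the measure `ν_α`, `0 < α ≤ 1`,
there is a constant `C` (depending on `λ, α`) with `K_b(m, ν_α) ≤ C + 2m/α` for all
sufficiently large `m`. -/
theorem stmt_10 (lam : ℝ) (hlam : 0 < lam) (a : ℝ) (ha0 : 0 < a) (ha1 : a ≤ 1) :
    ∃ C : ℝ, ∃ m₀ : ℕ, ∀ m : ℕ, m₀ ≤ m →
      Kb lam (nuAlpha a) m ≤ C + 2 * (m : ℝ) / a := by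
  refine ⟨Cconst lam a, 0, fun m _ => ?_⟩
  have hne : Nonempty (closedBall (0 : ℂ) 1) := ⟨⟨0, mem_closedBall_self zero_le_one⟩⟩
  unfold Kb
  apply ciSup_le
  intro z
  have hz : ‖z.1‖ ≤ 1 := by
    simpa using mem_closedBall_zero_iff.mp z.2
  exact sum_bound lam hlam a ha0 ha1 m z.1 hz
end

section
/- Let λ > 0, let m ≥ 0 be an integer, and for |j| ≤ m define the discretized plane-wave combination b_j^m(x) := (1/((2m+1) i^j)) Σ_{l=−m}^{m} e^{ijφ_l} e^{i k_l · x}, where φ_l := 2πl/(2m+1) and k_l := λ(cos φ_l, sin φ_l). Then for every x ∈ ℝ², b_j^m(x) = Σ_{p ∈ ℤ} i^{p(2m+1)} b_{λ, j+p(2m+1)}(x), the series being absolutely convergent. -/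
open MeasureTheory Metric

/-- term of the `J_n` series for integer order. -/
noncomputable def bTerm (n : ℤ) (k : ℕ) (x : ℝ) : ℝ :=
  (-1 : ℝ) ^ ((-n).toNat + k) * (x / 2) ^ (n.natAbs + 2 * k) /
    ((Nat.factorial k : ℝ) * (Nat.factorial (n.natAbs + k) : ℝ))

lemma bnat_hasSum (n : ℕ) (x : ℝ) :
    HasSum (fun k : ℕ => ((-1 : ℝ) ^ k / ((Nat.factorial k : ℝ) * (Nat.factorial (n + k) : ℝ))) *
      (x / 2) ^ (n + 2 * k)) (besselJnat n x) := by
  have hs : Summable (fun k : ℕ => ((-1 : ℝ) ^ k / ((Nat.factorial k : ℝ) *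
      (Nat.factorial (n + k) : ℝ))) * (x / 2) ^ (n + 2 * k)) := by
    apply Summable.of_norm_bounded
      (g := fun k => |x / 2| ^ n * ((|x / 2| ^ 2) ^ k / (Nat.factorial k : ℝ)))
    · exact (NormedSpace.expSeries_div_summable (|x / 2| ^ 2)).mul_left _
    · intro k
      have h1 : (1 : ℝ) ≤ (Nat.factorial (n + k) : ℝ) := by
        exact_mod_cast Nat.one_le_iff_ne_zero.mpr (Nat.factorial_ne_zero _)
      have hk : (0 : ℝ) < (Nat.factorial k : ℝ) := by positivity
      have : ‖((-1 : ℝ) ^ k / ((Nat.factorial k : ℝ) * (Nat.factorial (n + k) : ℝ))) *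
          (x / 2) ^ (n + 2 * k)‖ = |x / 2| ^ (n + 2 * k) /
            ((Nat.factorial k : ℝ) * (Nat.factorial (n + k) : ℝ)) := by
        rw [norm_mul, norm_div, norm_pow, norm_neg, norm_one, one_pow, norm_pow]
        rw [Real.norm_eq_abs, Real.norm_eq_abs, abs_of_pos (by positivity)]
        ring
      rw [this, pow_add, pow_mul, mul_div_assoc']
      apply div_le_div_of_nonneg_left (by positivity) hk
      nlinarith
  simpa [besselJnat] using hs.hasSum

lemma bTerm_hasSum (n : ℤ) (x : ℝ) :
    HasSum (fun k : ℕ => bTerm n k x) (besselJ n x) := by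
  rcases le_or_gt 0 n with hn | hn
  · have h0 : (-n).toNat = 0 := by omega
    have h1 : n.natAbs = n.toNat := by omega
    have := bnat_hasSum n.toNat x
    simp only [besselJ, if_pos hn, bTerm, h0, h1, zero_add]
    convert this using 2 with k
    ring
  · have h0 : (-n).toNat = n.natAbs := by omega
    have := (bnat_hasSum n.natAbs x).mul_left ((-1 : ℝ) ^ n.natAbs)
    simp only [besselJ, if_neg (by omega : ¬ (0:ℤ) ≤ n), bTerm, h0]
    convert this using 2 with k
    case e'_3 => rfl
    rw [pow_add]
    ring

/-- The reindexing equivalence `ℤ × ℕ ≃ ℕ × ℕ`. -/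
def zEquiv : ℤ × ℕ ≃ ℕ × ℕ where
  toFun q := (q.1.toNat + q.2, (-q.1).toNat + q.2)
  invFun p := ((p.1 : ℤ) - (p.2 : ℤ), min p.1 p.2)
  left_inv q := by
    obtain ⟨n, k⟩ := q
    simp only [Prod.mk.injEq]
    constructor <;> omega
  right_inv p := by
    obtain ⟨a, b⟩ := p
    simp only [Prod.mk.injEq]
    constructor <;> omega

/-- Master generating-function lemma. -/
lemma master (x : ℝ) (t : ℂ) (ht : t ≠ 0) :
    Summable (fun q : ℤ × ℕ => ‖((bTerm q.1 q.2 x : ℝ) : ℂ) * t ^ q.1‖) ∧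
    HasSum (fun n : ℤ => ((besselJ n x : ℝ) : ℂ) * t ^ n)
      (Complex.exp ((x / 2 : ℂ) * t - (x / 2 : ℂ) * t⁻¹)) := by
  set f : ℕ → ℂ := fun a => ((x / 2 : ℂ) * t) ^ a / (Nat.factorial a : ℂ) with hf
  set g : ℕ → ℂ := fun b => (-(x / 2 : ℂ) * t⁻¹) ^ b / (Nat.factorial b : ℂ) with hg
  have hfn : Summable fun a => ‖f a‖ := NormedSpace.norm_expSeries_div_summable _
  have hgn : Summable fun b => ‖g b‖ := NormedSpace.norm_expSeries_div_summable _
  have hFn : Summable (fun p : ℕ × ℕ => ‖f p.1 * g p.2‖) := by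
    have := hfn.mul_of_nonneg hgn (fun a => norm_nonneg _) (fun b => norm_nonneg _)
    refine this.congr fun p => ?_
    exact (norm_mul _ _).symm
  -- pointwise identification
  have key : ∀ q : ℤ × ℕ, f (zEquiv q).1 * g (zEquiv q).2 = ((bTerm q.1 q.2 x : ℝ) : ℂ) * t ^ q.1 := by
    rintro ⟨n, k⟩
    simp only [zEquiv, Equiv.coe_fn_mk, hf, hg]
    have habs : n.toNat + (-n).toNat = n.natAbs := by omega
    have hzpow : t ^ (n.toNat + k) * (t⁻¹) ^ ((-n).toNat + k) = t ^ n := by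
      rw [inv_pow, ← zpow_natCast t, ← zpow_natCast t, ← zpow_neg, ← zpow_add₀ ht]
      congr 1
      omega
    have hfact : ((Nat.factorial (n.toNat + k) : ℂ)) * (Nat.factorial ((-n).toNat + k) : ℂ) =
        (Nat.factorial k : ℂ) * (Nat.factorial (n.natAbs + k) : ℂ) := by
      rcases le_or_gt 0 n with hn | hn
      · have h0 : (-n).toNat = 0 := by omega
        have h1 : n.natAbs = n.toNat := by omega
        rw [h0, h1, zero_add, mul_comm]
      · have h0 : n.toNat = 0 := by omega
        have h1 : (-n).toNat = n.natAbs := by omega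
        rw [h0, h1, zero_add]
    have hx2 : ((x / 2 : ℂ)) ^ (n.toNat + k) * (-(x / 2 : ℂ)) ^ ((-n).toNat + k)
        = (-1 : ℂ) ^ ((-n).toNat + k) * ((x / 2 : ℂ)) ^ (n.natAbs + 2 * k) := by
      rw [neg_pow, show n.natAbs + 2 * k = (n.toNat + k) + ((-n).toNat + k) by omega, pow_add]
      ring
    rw [mul_pow, mul_pow, div_mul_div_comm]
    rw [show ((x / 2 : ℂ)) ^ (n.toNat + k) * t ^ (n.toNat + k) *
        ((-(x / 2 : ℂ)) ^ ((-n).toNat + k) * (t⁻¹) ^ ((-n).toNat + k)) =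
        (((x / 2 : ℂ)) ^ (n.toNat + k) * (-(x / 2 : ℂ)) ^ ((-n).toNat + k)) *
        (t ^ (n.toNat + k) * (t⁻¹) ^ ((-n).toNat + k)) by ring, hzpow, hx2, hfact]
    simp only [bTerm]
    push_cast
    ring
  -- summability over ℤ × ℕ
  have hsum1 : Summable (fun q : ℤ × ℕ => ‖((bTerm q.1 q.2 x : ℝ) : ℂ) * t ^ q.1‖) := by
    have : Summable ((fun p : ℕ × ℕ => ‖f p.1 * g p.2‖) ∘ zEquiv) :=
      (Equiv.summable_iff zEquiv).mpr hFn
    refine this.congr fun q => ?_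
    simp only [Function.comp_apply]
    rw [key q]
  refine ⟨hsum1, ?_⟩
  -- total sum
  have hexpf : HasSum f (Complex.exp ((x / 2 : ℂ) * t)) := by
    rw [Complex.exp_eq_exp_ℂ, NormedSpace.exp_eq_tsum_div]
    exact (NormedSpace.expSeries_div_summable _).hasSum
  have hexpg : HasSum g (Complex.exp (-(x / 2 : ℂ) * t⁻¹)) := by
    rw [Complex.exp_eq_exp_ℂ, NormedSpace.exp_eq_tsum_div]
    exact (NormedSpace.expSeries_div_summable _).hasSum
  have hF : HasSum (fun p : ℕ × ℕ => f p.1 * g p.2)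
      (Complex.exp ((x / 2 : ℂ) * t) * Complex.exp (-(x / 2 : ℂ) * t⁻¹)) := by
    have hFs : Summable (fun p : ℕ × ℕ => f p.1 * g p.2) := hFn.of_norm
    have := tsum_mul_tsum_of_summable_norm hfn hgn
    rw [hexpf.tsum_eq, hexpg.tsum_eq] at this
    rw [this]
    exact hFs.hasSum
  have hFz : HasSum (fun q : ℤ × ℕ => ((bTerm q.1 q.2 x : ℝ) : ℂ) * t ^ q.1)
      (Complex.exp ((x / 2 : ℂ) * t) * Complex.exp (-(x / 2 : ℂ) * t⁻¹)) := by
    have heq : (fun q : ℤ × ℕ => ((bTerm q.1 q.2 x : ℝ) : ℂ) * t ^ q.1) =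
        (fun p : ℕ × ℕ => f p.1 * g p.2) ∘ zEquiv := funext fun q => (key q).symm
    rw [heq]
    exact (Equiv.hasSum_iff zEquiv).mpr hF
  have hfib : ∀ n : ℤ, HasSum (fun k : ℕ => ((bTerm n k x : ℝ) : ℂ) * t ^ n)
      (((besselJ n x : ℝ) : ℂ) * t ^ n) := by
    intro n
    exact ((Complex.ofRealCLM.hasSum (bTerm_hasSum n x))).mul_right _
  have := hFz.prod_fiberwise hfib
  rw [← Complex.exp_add] at this
  convert this using 2
  ring

lemma rootSum (m : ℕ) (d : ℤ) :
    ∑ l ∈ Finset.Icc (-(m : ℤ)) (m : ℤ), Complex.exp (Complex.I * d * ((phiAngle m l : ℝ) : ℂ)) =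
      if ((2 * (m : ℤ) + 1) ∣ d) then ((2 * m + 1 : ℕ) : ℂ) else 0 := by
  have hM : ((2 * m + 1 : ℕ) : ℂ) ≠ 0 := Nat.cast_ne_zero.mpr (by omega)
  set c : ℂ := Complex.I * d * (2 * Real.pi / (2 * m + 1)) with hc
  set w : ℂ := Complex.exp c with hw
  have hterm : ∀ l : ℤ, Complex.exp (Complex.I * d * ((phiAngle m l : ℝ) : ℂ)) = w ^ l := by
    intro l
    rw [hw, ← Complex.exp_int_mul]
    congr 1
    simp only [phiAngle, hc]
    push_cast
    ring
  have hcard : (Finset.Icc (-(m : ℤ)) (m : ℤ)).card = 2 * m + 1 := by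
    rw [Int.card_Icc]
    omega
  have hne : (2 * (m : ℂ) + 1) ≠ 0 := by
    have h2 : ((2 * m + 1 : ℕ) : ℂ) = 2 * (m : ℂ) + 1 := by push_cast; ring
    rw [← h2]; exact hM
  by_cases hdvd : (2 * (m : ℤ) + 1) ∣ d
  · obtain ⟨q, hq⟩ := id hdvd
    have hw1 : w = 1 := by
      rw [hw, hc, hq]
      have : Complex.I * ((2 * (m : ℤ) + 1) * q : ℤ) * (2 * Real.pi / (2 * m + 1)) =
          (q : ℂ) * (2 * Real.pi * Complex.I) := by
        push_cast
        field_simp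
      rw [this]
      exact Complex.exp_int_mul_two_pi_mul_I q
    simp only [if_pos hdvd]
    rw [Finset.sum_congr rfl fun l _ => (hterm l).trans (by rw [hw1, one_zpow])]
    rw [Finset.sum_const, hcard]
    simp
  · have hwM : w ^ (2 * m + 1 : ℕ) = 1 := by
      rw [hw, ← Complex.exp_nat_mul]
      have : (2 * m + 1 : ℕ) * c = (d : ℂ) * (2 * Real.pi * Complex.I) := by
        rw [hc]
        push_cast
        field_simp
      rw [this]
      exact Complex.exp_int_mul_two_pi_mul_I d
    have hw1 : w ≠ 1 := by
      intro h
      rw [hw, Complex.exp_eq_one_iff] at h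
      obtain ⟨q, hqe⟩ := h
      apply hdvd
      refine ⟨q, ?_⟩
      have hpi := Real.pi_ne_zero
      rw [hc] at hqe
      have hI := Complex.I_ne_zero
      have hpi' : (Real.pi : ℂ) ≠ 0 := Complex.ofReal_ne_zero.mpr hpi
      have h5 : (2 * (Real.pi : ℂ) * Complex.I) ≠ 0 := by
        simp [hpi', hI]
      have hd : (d : ℂ) = (2 * (m : ℂ) + 1) * (q : ℂ) := by
        apply mul_left_cancel₀ h5
        calc (2 * (Real.pi : ℂ) * Complex.I) * (d : ℂ)
            = (Complex.I * (d : ℂ) * (2 * (Real.pi : ℂ) / (2 * (m : ℂ) + 1))) *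
              (2 * (m : ℂ) + 1) := by
              field_simp
          _ = ((q : ℂ) * (2 * (Real.pi : ℂ) * Complex.I)) * (2 * (m : ℂ) + 1) := by rw [hqe]
          _ = (2 * (Real.pi : ℂ) * Complex.I) * ((2 * (m : ℂ) + 1) * (q : ℂ)) := by ring
      exact_mod_cast hd
    have hw0 : w ≠ 0 := Complex.exp_ne_zero _
    have hre : ∑ l ∈ Finset.Icc (-(m : ℤ)) (m : ℤ), w ^ l =
        ∑ k ∈ Finset.range (2 * m + 1), w ^ ((k : ℤ) - (m : ℤ)) := by
      refine Finset.sum_bij' (fun l _ => (l + (m : ℤ)).toNat) (fun k _ => (k : ℤ) - m)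
        ?_ ?_ ?_ ?_ ?_
      · intro l hl
        show (l + (m : ℤ)).toNat ∈ Finset.range (2 * m + 1)
        simp only [Finset.mem_Icc] at hl
        simp only [Finset.mem_range]
        omega
      · intro k hk
        show ((k : ℤ) - (m : ℤ)) ∈ Finset.Icc (-(m : ℤ)) (m : ℤ)
        simp only [Finset.mem_range] at hk
        simp only [Finset.mem_Icc]
        omega
      · intro l hl
        show ((l + (m : ℤ)).toNat : ℤ) - (m : ℤ) = l
        simp only [Finset.mem_Icc] at hl
        omega
      · intro k hk
        show ((k : ℤ) - (m : ℤ) + (m : ℤ)).toNat = k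
        simp only [Finset.mem_range] at hk
        omega
      · intro l hl
        show w ^ l = w ^ (((l + (m : ℤ)).toNat : ℤ) - (m : ℤ))
        simp only [Finset.mem_Icc] at hl
        congr 1
        omega
    rw [Finset.sum_congr rfl fun l _ => hterm l, hre]
    have : ∀ k ∈ Finset.range (2 * m + 1), w ^ ((k : ℤ) - (m : ℤ)) = w ^ (-(m : ℤ)) * w ^ k := by
      intro k _
      rw [← zpow_natCast w k, ← zpow_add₀ hw0]
      congr 1
      omega
    rw [Finset.sum_congr rfl this, ← Finset.mul_sum, geom_sum_eq hw1, hwM]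
    simp [hdvd]

/-- Aliasing identity: for `|j| ≤ m` and every `x ∈ ℝ²`,
`b_j^m(x) = Σ_{p ∈ ℤ} i^{p(2m+1)} b_{λ, j+p(2m+1)}(x)`, the series converging absolutely. -/
theorem stmt_11 (lam : ℝ) (hlam : 0 < lam) (m : ℕ) (j : ℤ) (hj : |j| ≤ (m : ℤ)) :
    ∀ z : ℂ,
      Summable (fun p : ℤ =>
        ‖Complex.I ^ (p * (2 * (m : ℤ) + 1)) *
          fourierBessel lam (j + p * (2 * (m : ℤ) + 1)) z‖) ∧
      pwave lam m j z =
        ∑' p : ℤ, Complex.I ^ (p * (2 * (m : ℤ) + 1)) *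
          fourierBessel lam (j + p * (2 * (m : ℤ) + 1)) z := by
  intro z
  set ρ : ℝ := lam * ‖z‖ with hρ
  set θ : ℝ := Complex.arg z with hθ
  set M : ℤ := 2 * (m : ℤ) + 1 with hM
  have hMne : M ≠ 0 := by omega
  have hI0 : (Complex.I : ℂ) ≠ 0 := Complex.I_ne_zero
  -- the plane wave as a generating-function value
  set tf : ℝ → ℂ := fun φ => Complex.I * Complex.exp (((θ - φ : ℝ) : ℂ) * Complex.I) with htf
  have htne : ∀ φ : ℝ, tf φ ≠ 0 := fun φ =>
    mul_ne_zero hI0 (Complex.exp_ne_zero _)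
  have pw : ∀ φ : ℝ, planeWaveFn lam φ z =
      Complex.exp ((ρ / 2 : ℂ) * tf φ - (ρ / 2 : ℂ) * (tf φ)⁻¹) := by
    intro φ
    unfold planeWaveFn
    congr 1
    have hre : ‖z‖ * Real.cos θ = z.re := Complex.norm_mul_cos_arg z
    have him : ‖z‖ * Real.sin θ = z.im := Complex.norm_mul_sin_arg z
    have hreal : lam * (Real.cos φ * z.re + Real.sin φ * z.im) = ρ * Real.cos (θ - φ) := by
      rw [← hre, ← him, Real.cos_sub, hρ]
      ring
    have hinv : (tf φ)⁻¹ = -(Complex.I * Complex.exp (-(((θ - φ : ℝ) : ℂ)) * Complex.I)) := by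
      rw [htf]
      simp only
      rw [mul_inv, Complex.inv_I, ← Complex.exp_neg]
      ring
    rw [hinv, hreal, htf]
    simp only
    push_cast
    linear_combination (Complex.I * (ρ : ℂ) / 2) * Complex.two_cos (((θ : ℝ) : ℂ) - ((φ : ℝ) : ℂ))
  -- per-angle Jacobi-Anger expansion
  have hJA : ∀ φ : ℝ, HasSum (fun n : ℤ => ((besselJ n ρ : ℝ) : ℂ) * (tf φ) ^ n)
      (planeWaveFn lam φ z) := by
    intro φ
    rw [pw φ]
    exact (master ρ (tf φ) (htne φ)).2
  -- sum over the discrete angles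
  have hS : HasSum (fun n : ℤ => ∑ l ∈ Finset.Icc (-(m : ℤ)) (m : ℤ),
      Complex.exp (Complex.I * j * ((phiAngle m l : ℝ) : ℂ)) *
        (((besselJ n ρ : ℝ) : ℂ) * (tf (phiAngle m l)) ^ n))
      (∑ l ∈ Finset.Icc (-(m : ℤ)) (m : ℤ),
        Complex.exp (Complex.I * j * ((phiAngle m l : ℝ) : ℂ)) *
          planeWaveFn lam (phiAngle m l) z) :=
    hasSum_sum fun l _ => (hJA (phiAngle m l)).mul_left _
  have hP0 : HasSum (fun n : ℤ => (1 / (((2 * m + 1 : ℕ) : ℂ) * Complex.I ^ j)) *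
      ∑ l ∈ Finset.Icc (-(m : ℤ)) (m : ℤ),
        Complex.exp (Complex.I * j * ((phiAngle m l : ℝ) : ℂ)) *
          (((besselJ n ρ : ℝ) : ℂ) * (tf (phiAngle m l)) ^ n))
      (pwave lam m j z) := hS.mul_left _
  -- identify the summand
  set G : ℤ → ℂ := fun n => if M ∣ (j - n) then
      Complex.I ^ (n - j) * (Complex.exp (Complex.I * n * (θ : ℂ)) * ((besselJ n ρ : ℝ) : ℂ))
    else 0 with hG
  have hsummand : ∀ n : ℤ, (1 / (((2 * m + 1 : ℕ) : ℂ) * Complex.I ^ j)) *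
      (∑ l ∈ Finset.Icc (-(m : ℤ)) (m : ℤ),
        Complex.exp (Complex.I * j * ((phiAngle m l : ℝ) : ℂ)) *
          (((besselJ n ρ : ℝ) : ℂ) * (tf (phiAngle m l)) ^ n)) = G n := by
    intro n
    have hsplit : ∀ φ : ℝ, Complex.exp (Complex.I * j * (φ : ℂ)) *
        (((besselJ n ρ : ℝ) : ℂ) * (tf φ) ^ n) =
        (((besselJ n ρ : ℝ) : ℂ) * (Complex.I ^ n * Complex.exp (Complex.I * n * (θ : ℂ)))) *
          Complex.exp (Complex.I * (j - n : ℤ) * (φ : ℂ)) := by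
      intro φ
      have h1 : (tf φ) ^ n = Complex.I ^ n * Complex.exp ((n : ℂ) * (((θ - φ : ℝ) : ℂ) * Complex.I)) := by
        rw [htf]
        simp only
        rw [mul_zpow, Complex.exp_int_mul]
      have hexp : Complex.I * (j : ℂ) * (φ : ℂ) + (n : ℂ) * (((θ - φ : ℝ) : ℂ) * Complex.I) =
          Complex.I * (n : ℂ) * (θ : ℂ) + Complex.I * ((j - n : ℤ) : ℂ) * (φ : ℂ) := by
        push_cast
        ring
      calc Complex.exp (Complex.I * j * (φ : ℂ)) *
          (((besselJ n ρ : ℝ) : ℂ) * (tf φ) ^ n)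
          = ((besselJ n ρ : ℝ) : ℂ) * Complex.I ^ n *
            Complex.exp (Complex.I * (j : ℂ) * (φ : ℂ) + (n : ℂ) * (((θ - φ : ℝ) : ℂ) * Complex.I)) := by
            rw [h1, Complex.exp_add]
            ring
        _ = ((besselJ n ρ : ℝ) : ℂ) * Complex.I ^ n *
            Complex.exp (Complex.I * (n : ℂ) * (θ : ℂ) + Complex.I * ((j - n : ℤ) : ℂ) * (φ : ℂ)) := by
            rw [hexp]
        _ = (((besselJ n ρ : ℝ) : ℂ) * (Complex.I ^ n * Complex.exp (Complex.I * n * (θ : ℂ)))) *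
            Complex.exp (Complex.I * (j - n : ℤ) * (φ : ℂ)) := by
            rw [Complex.exp_add]
            ring
    rw [Finset.sum_congr rfl fun l _ => hsplit (phiAngle m l), ← Finset.mul_sum,
      rootSum m (j - n)]
    simp only [hG, hM]
    by_cases hdvd : (2 * (m : ℤ) + 1) ∣ (j - n)
    · rw [if_pos hdvd, if_pos hdvd]
      have hMc : ((2 * m + 1 : ℕ) : ℂ) ≠ 0 := Nat.cast_ne_zero.mpr (by omega)
      have hIj : (Complex.I : ℂ) ^ j ≠ 0 := zpow_ne_zero _ hI0
      have hpow : Complex.I ^ n = Complex.I ^ (n - j) * Complex.I ^ j := by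
        rw [← zpow_add₀ hI0]
        congr 1
        ring
      rw [hpow, one_div, inv_mul_eq_div, div_eq_iff (mul_ne_zero hMc hIj)]
      ring
    · rw [if_neg hdvd, if_neg hdvd]
      simp
  have hPG : HasSum G (pwave lam m j z) := by
    have heq : (fun n : ℤ => (1 / (((2 * m + 1 : ℕ) : ℂ) * Complex.I ^ j)) *
        ∑ l ∈ Finset.Icc (-(m : ℤ)) (m : ℤ),
          Complex.exp (Complex.I * j * ((phiAngle m l : ℝ) : ℂ)) *
            (((besselJ n ρ : ℝ) : ℂ) * (tf (phiAngle m l)) ^ n)) = G := funext hsummand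
    rw [← heq]
    exact hP0
  -- reindex over the support
  set em : ℤ → ℤ := fun p => j + p * M with hem
  have hinj : Function.Injective em := by
    intro p q h
    simp only [hem] at h
    have : p * M = q * M := by omega
    exact mul_right_cancel₀ hMne this
  have hsupp : ∀ n : ℤ, n ∉ Set.range em → G n = 0 := by
    intro n hn
    simp only [hG]
    rw [if_neg]
    intro hdvd
    apply hn
    obtain ⟨q, hq⟩ := hdvd
    exact ⟨-q, show j + -q * M = n by linear_combination hq⟩
  have hGe : ∀ p : ℤ, G (em p) = Complex.I ^ (p * M) * fourierBessel lam (j + p * M) z := by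
    intro p
    have hdvd : M ∣ (j - em p) := ⟨-p, show j - (j + p * M) = M * -p by ring⟩
    simp only [hG, hem]
    rw [if_pos (by simpa [hem] using hdvd)]
    rw [show j + p * M - j = p * M by ring]
    rfl
  have hPfinal : HasSum (fun p : ℤ => Complex.I ^ (p * M) * fourierBessel lam (j + p * M) z)
      (pwave lam m j z) := by
    have := (hinj.hasSum_iff hsupp).mpr hPG
    have heq2 : (G ∘ em) = fun p : ℤ =>
        Complex.I ^ (p * M) * fourierBessel lam (j + p * M) z := funext hGe
    rwa [heq2] at this
  constructor
  · -- norm summability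
    have hnorm := (master ρ Complex.I hI0).1
    have hnn : ∀ q : ℤ × ℕ, 0 ≤ ‖((bTerm q.1 q.2 ρ : ℝ) : ℂ) * Complex.I ^ q.1‖ :=
      fun q => norm_nonneg _
    obtain ⟨hfib, hmarg⟩ := (summable_prod_of_nonneg hnn).mp hnorm
    have habs : ∀ n : ℤ, ∀ k : ℕ, ‖((bTerm n k ρ : ℝ) : ℂ) * Complex.I ^ n‖ = |bTerm n k ρ| := by
      intro n k
      rw [norm_mul, norm_zpow, Complex.norm_I,
        one_zpow, Complex.norm_real, Real.norm_eq_abs, mul_one]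
    have hbound : ∀ n : ℤ, |besselJ n ρ| ≤ ∑' k : ℕ, ‖((bTerm n k ρ : ℝ) : ℂ) * Complex.I ^ n‖ := by
      intro n
      have h1 : |besselJ n ρ| = ‖∑' k : ℕ, bTerm n k ρ‖ := by
        rw [(bTerm_hasSum n ρ).tsum_eq]
        rfl
      rw [h1]
      calc ‖∑' k : ℕ, bTerm n k ρ‖ ≤ ∑' k : ℕ, ‖bTerm n k ρ‖ :=
            norm_tsum_le_tsum_norm (by
              refine (hfib n).congr fun k => ?_
              rw [habs n k]; rfl)
        _ = ∑' k : ℕ, ‖((bTerm n k ρ : ℝ) : ℂ) * Complex.I ^ n‖ := by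
              refine tsum_congr fun k => ?_
              rw [habs n k]; rfl
    have hnormval : ∀ p : ℤ, ‖Complex.I ^ (p * M) * fourierBessel lam (j + p * M) z‖ =
        |besselJ (j + p * M) ρ| := by
      intro p
      rw [norm_mul, fourierBessel, norm_mul, ← hρ, ← hθ]
      rw [norm_zpow, Complex.norm_I, one_zpow, one_mul]
      rw [Complex.norm_exp]
      have : (Complex.I * ((j + p * M : ℤ) : ℂ) * ((θ : ℝ) : ℂ)).re = 0 := by
        simp [Complex.mul_re, Complex.mul_im]
      rw [this, Real.exp_zero, one_mul, Complex.norm_real, Real.norm_eq_abs]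
    have hmarg' : Summable fun p : ℤ =>
        ∑' k : ℕ, ‖((bTerm (j + p * M) k ρ : ℝ) : ℂ) * Complex.I ^ (j + p * M)‖ := by
      have h := hmarg.comp_injective hinj
      exact h.congr fun p => rfl
    refine Summable.of_nonneg_of_le (fun p => norm_nonneg _) (fun p => ?_) hmarg'
    rw [hnormval p]
    exact hbound (j + p * M)
  · exact hPfinal.tsum_eq.symm
end

section
/- Let Ω be the closed unit disk in ℝ², let λ > 0, let m ≥ 0 be an integer, and let ν be any finite rotation-invariant Borel measure on Ω (in particular any ν_α, 0 ≤ α ≤ 1). Then the functions b_j^m(x) := (1/((2m+1) i^j)) Σ_{l=−m}^{m} e^{ijφ_l} e^{i k_l · x}, for j = −m, …, m (with φ_l := 2πl/(2m+1), k_l := λ(cos φ_l, sin φ_l)), are pairwise orthogonal in L²(Ω, ν): ∫_Ω b_j^m \overline{b_k^m} dν = 0 for j ≠ k, and they span the same space as the 2m+1 plane waves e_{k_l}, l = −m, …, m. -/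
open MeasureTheory Metric

lemma exp_theta_mul_re (θ : ℝ) (z : ℂ) :
    (Complex.exp (θ * Complex.I) * z).re = Real.cos θ * z.re - Real.sin θ * z.im := by
  simp only [Complex.exp_mul_I, Complex.mul_re, Complex.add_re, Complex.add_im, Complex.mul_im,
    Complex.I_re, Complex.I_im, Complex.cos_ofReal_re, Complex.cos_ofReal_im,
    Complex.sin_ofReal_re, Complex.sin_ofReal_im]
  ring

lemma exp_theta_mul_im (θ : ℝ) (z : ℂ) :
    (Complex.exp (θ * Complex.I) * z).im = Real.sin θ * z.re + Real.cos θ * z.im := by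
  simp only [Complex.exp_mul_I, Complex.mul_re, Complex.add_re, Complex.add_im, Complex.mul_im,
    Complex.I_re, Complex.I_im, Complex.cos_ofReal_re, Complex.cos_ofReal_im,
    Complex.sin_ofReal_re, Complex.sin_ofReal_im]
  ring

lemma planeWaveFn_rot (lam θ phi : ℝ) (z : ℂ) :
    planeWaveFn lam phi (Complex.exp (↑θ * Complex.I) * z) = planeWaveFn lam (phi - θ) z := by
  unfold planeWaveFn
  congr 2
  rw [exp_theta_mul_re, exp_theta_mul_im, Real.cos_sub, Real.sin_sub]
  ring

lemma phiAngle_sub (m : ℕ) (a b : ℤ) : phiAngle m (a - b) = phiAngle m a - phiAngle m b := by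
  unfold phiAngle; push_cast; ring

lemma phiAngle_int_mul (m : ℕ) (d : ℤ) : phiAngle m d = d * phiAngle m 1 := by
  unfold phiAngle; push_cast; ring

lemma phiAngle_period (m : ℕ) (a : ℤ) :
    phiAngle m (a + (2 * m + 1)) = phiAngle m a + 2 * Real.pi := by
  unfold phiAngle
  have h : ((2:ℝ) * m + 1) ≠ 0 := by positivity
  field_simp
  push_cast
  ring

lemma planeWaveFn_period (lam phi : ℝ) (z : ℂ) :
    planeWaveFn lam (phi + 2 * Real.pi) z = planeWaveFn lam phi z := by
  unfold planeWaveFn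
  rw [Real.cos_add_two_pi, Real.sin_add_two_pi]

lemma Icc_eq_map (m : ℕ) :
    Finset.Icc (-(m:ℤ)) (m:ℤ) =
      (Finset.range (2*m+1)).map ⟨fun t : ℕ => (t:ℤ) - m, by intro a b h; simp only [] at h; omega⟩ := by
  ext l
  simp only [Finset.mem_Icc, Finset.mem_map, Finset.mem_range, Function.Embedding.coeFn_mk]
  constructor
  · rintro ⟨h1, h2⟩
    exact ⟨(l + m).toNat, by omega, by show ((l + m).toNat : ℤ) - m = l; omega⟩
  · rintro ⟨t, ht, rfl⟩
    show -(m:ℤ) ≤ (t:ℤ) - m ∧ (t:ℤ) - m ≤ m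
    omega

lemma sum_Icc_eq_range (m : ℕ) (f : ℤ → ℂ) :
    ∑ l ∈ Finset.Icc (-(m:ℤ)) (m:ℤ), f l = ∑ t ∈ Finset.range (2*m+1), f ((t:ℤ) - m) := by
  rw [Icc_eq_map, Finset.sum_map]
  rfl

lemma sum_Icc_shift (m : ℕ) (h : ℤ → ℂ) (hper : ∀ l, h (l + (2*m+1)) = h l) :
    ∑ l ∈ Finset.Icc (-(m:ℤ)) (m:ℤ), h l = ∑ l ∈ Finset.Icc (-(m:ℤ)) (m:ℤ), h (l + 1) := by
  rw [sum_Icc_eq_range, sum_Icc_eq_range m (fun l => h (l + 1))]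
  have e1 : (2*m+1) = (2*m) + 1 := rfl
  rw [e1, Finset.sum_range_succ' (fun t => h ((t:ℤ) - m)) (2*m),
    Finset.sum_range_succ (fun t => h ((t:ℤ) - m + 1)) (2*m)]
  congr 1
  · apply Finset.sum_congr rfl
    intro i _
    congr 1
    push_cast
    ring
  · rw [show ((0:ℕ):ℤ) - m = -(m:ℤ) by simp, show ((2*m:ℕ):ℤ) - m + 1 = -(m:ℤ) + (2*m+1) by push_cast; ring]
    exact (hper _).symm

lemma exp_phiAngle_ne_one (m : ℕ) (d : ℤ) (hd : d ≠ 0) (hd2 : |d| ≤ 2*m) :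
    Complex.exp (Complex.I * ((phiAngle m d : ℝ) : ℂ)) ≠ 1 := by
  intro h
  rw [Complex.exp_eq_one_iff] at h
  obtain ⟨n, hn⟩ := h
  have h2 : ((phiAngle m d : ℝ) : ℂ) = ((n * (2 * Real.pi) : ℝ) : ℂ) := by
    apply mul_left_cancel₀ Complex.I_ne_zero
    rw [hn]
    push_cast
    ring
  have h3 : phiAngle m d = n * (2 * Real.pi) := Complex.ofReal_injective h2
  unfold phiAngle at h3
  have hπ : Real.pi ≠ 0 := Real.pi_ne_zero
  have hne : ((2:ℝ) * m + 1) ≠ 0 := by positivity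
  have h4 : (d : ℝ) = (n : ℝ) * (2 * m + 1) := by
    field_simp at h3
    have h2pi : (2 * Real.pi) ≠ 0 := by positivity
    apply mul_left_cancel₀ h2pi
    linear_combination (2 * Real.pi) * h3
  have h5 : d = n * (2 * m + 1) := by exact_mod_cast h4
  rcases eq_or_ne n 0 with rfl | hn0
  · simp at h5; exact hd h5
  · have hn1 : (1:ℤ) ≤ |n| := by
      rcases lt_or_gt_of_ne hn0 with h | h
      · rw [abs_of_neg h]; omega
      · rw [abs_of_pos h]; omega
    have hbig : (2 * (m:ℤ) + 1) ≤ |d| := by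
      rw [h5, abs_mul]
      have habs : |((2:ℤ) * m + 1)| = 2 * m + 1 := abs_of_pos (by positivity)
      rw [habs]
      nlinarith [abs_nonneg n]
    linarith

lemma dft_full (m : ℕ) (d : ℤ) (hd2 : |d| ≤ 2*m) :
    ∑ j ∈ Finset.Icc (-(m:ℤ)) (m:ℤ), Complex.exp (Complex.I * j * ((phiAngle m d : ℝ) : ℂ))
      = if d = 0 then ((2*m+1 : ℕ) : ℂ) else 0 := by
  rcases eq_or_ne d 0 with rfl | hd
  · simp only [if_pos rfl]
    have h0 : phiAngle m 0 = 0 := by unfold phiAngle; simp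
    rw [h0]
    simp only [Complex.ofReal_zero, mul_zero, Complex.exp_zero, Finset.sum_const, nsmul_eq_mul,
      mul_one]
    rw [Int.card_Icc, show ((m:ℤ) + 1 - -(m:ℤ)).toNat = 2*m+1 from by omega]
    simp
  · rw [if_neg hd]
    set ω := Complex.exp (Complex.I * ((phiAngle m d : ℝ) : ℂ)) with hω
    have hωne : ω ≠ 0 := Complex.exp_ne_zero _
    have hω1 : ω ≠ 1 := exp_phiAngle_ne_one m d hd hd2
    have hterm : ∀ j : ℤ, Complex.exp (Complex.I * j * ((phiAngle m d : ℝ) : ℂ)) = ω ^ j := by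
      intro j
      rw [hω, ← Complex.exp_int_mul]
      congr 1
      ring
    simp only [hterm]
    rw [sum_Icc_eq_range m (fun j => ω ^ j)]
    have : ∀ t : ℕ, ω ^ ((t:ℤ) - m) = ω ^ (-(m:ℤ)) * ω ^ t := by
      intro t
      rw [show (t:ℤ) - m = -(m:ℤ) + t from by ring, zpow_add₀ hωne, zpow_natCast]
    simp only [this, ← Finset.mul_sum]
    have hgeom : ∑ t ∈ Finset.range (2*m+1), ω ^ t = (ω ^ (2*m+1) - 1) / (ω - 1) :=
      geom_sum_eq hω1 _
    have hωN : ω ^ (2*m+1) = 1 := by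
      rw [hω, ← Complex.exp_nat_mul]
      have harg : ((2*m+1 : ℕ) : ℂ) * (Complex.I * ((phiAngle m d : ℝ) : ℂ))
          = (d : ℂ) * (2 * (Real.pi : ℂ) * Complex.I) := by
        have hr : ((2*m+1 : ℕ) : ℝ) * phiAngle m d = d * (2 * Real.pi) := by
          unfold phiAngle
          have hne : ((2:ℝ) * m + 1) ≠ 0 := by positivity
          field_simp
          push_cast
          ring
        calc ((2*m+1 : ℕ) : ℂ) * (Complex.I * ((phiAngle m d : ℝ) : ℂ))
            = Complex.I * ((((2*m+1 : ℕ) : ℝ) * phiAngle m d : ℝ) : ℂ) := by push_cast; ring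
          _ = Complex.I * (((d : ℝ) * (2 * Real.pi) : ℝ) : ℂ) := by rw [hr]
          _ = (d : ℂ) * (2 * (Real.pi : ℂ) * Complex.I) := by push_cast; ring
      rw [harg, Complex.exp_int_mul, Complex.exp_two_pi_mul_I, one_zpow]
    rw [hgeom, hωN]
    simp


lemma exp_I_period (j : ℤ) (x : ℝ) :
    Complex.exp (Complex.I * j * ((x + 2 * Real.pi : ℝ) : ℂ)) =
      Complex.exp (Complex.I * j * ((x : ℝ) : ℂ)) := by
  push_cast
  rw [mul_add, Complex.exp_add]
  have : Complex.exp (Complex.I * j * (2 * Real.pi)) = 1 := by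
    rw [show Complex.I * j * (2 * (Real.pi : ℂ)) = (j : ℂ) * (2 * Real.pi * Complex.I) from by ring,
      Complex.exp_int_mul, Complex.exp_two_pi_mul_I, one_zpow]
  rw [this, mul_one]

lemma pwave_rot (lam : ℝ) (m : ℕ) (j : ℤ) (z : ℂ) :
    pwave lam m j (Complex.exp ((phiAngle m 1 : ℝ) * Complex.I) * z)
      = Complex.exp (Complex.I * j * ((phiAngle m 1 : ℝ) : ℂ)) * pwave lam m j z := by
  unfold pwave
  rw [mul_left_comm]
  congr 1
  rw [Finset.mul_sum]
  have hstep : ∀ l : ℤ,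
      Complex.exp (Complex.I * j * ((phiAngle m l : ℝ) : ℂ)) *
        planeWaveFn lam (phiAngle m l) (Complex.exp ((phiAngle m 1 : ℝ) * Complex.I) * z)
      = Complex.exp (Complex.I * j * ((phiAngle m l : ℝ) : ℂ)) *
        planeWaveFn lam (phiAngle m (l - 1)) z := by
    intro l
    rw [planeWaveFn_rot, phiAngle_sub]
  simp only [hstep]
  -- define h l := e^{ijφ_l} * planeWave(φ_{l-1}) z ; LHS = Σ h, RHS = Σ h(l+1)
  have hper : ∀ l : ℤ,
      (fun l : ℤ => Complex.exp (Complex.I * j * ((phiAngle m l : ℝ) : ℂ)) *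
        planeWaveFn lam (phiAngle m (l - 1)) z) (l + (2*m+1))
      = (fun l : ℤ => Complex.exp (Complex.I * j * ((phiAngle m l : ℝ) : ℂ)) *
        planeWaveFn lam (phiAngle m (l - 1)) z) l := by
    intro l
    beta_reduce
    rw [phiAngle_period, exp_I_period,
      show l + (2*(m:ℤ)+1) - 1 = (l - 1) + (2*m+1) from by ring, phiAngle_period,
      planeWaveFn_period]
  rw [sum_Icc_shift m _ hper]
  apply Finset.sum_congr rfl
  intro l _
  beta_reduce
  rw [show l + 1 - 1 = l from by ring,
    show phiAngle m (l + 1) = phiAngle m l + phiAngle m 1 from by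
      rw [show l + 1 = l - (-1) from by ring, phiAngle_sub,
        show phiAngle m (-1) = -phiAngle m 1 from by unfold phiAngle; push_cast; ring]
      ring]
  push_cast
  rw [mul_add, Complex.exp_add]
  ring

lemma planeWaveFn_continuous (lam phi : ℝ) : Continuous (planeWaveFn lam phi) := by
  unfold planeWaveFn
  fun_prop

lemma pwave_continuous (lam : ℝ) (m : ℕ) (j : ℤ) : Continuous (pwave lam m j) := by
  unfold pwave
  refine continuous_const.mul ?_
  exact continuous_finset_sum _ fun l _ => continuous_const.mul (planeWaveFn_continuous _ _)


lemma pwave_orth (lam : ℝ) (m : ℕ) (ν : Measure ℂ)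
    (hrot : RotationInvariant ν) (j k : ℤ) (hj : |j| ≤ (m:ℤ)) (hk : |k| ≤ (m:ℤ))
    (hjk : j ≠ k) :
    (∫ z, pwave lam m j z * (starRingEnd ℂ) (pwave lam m k z) ∂ν) = 0 := by
  set θ := phiAngle m 1 with hθ
  set c : ℂ := Complex.exp (Complex.I * ((phiAngle m (j - k) : ℝ) : ℂ)) with hc
  have hcont : Continuous fun z => pwave lam m j z * (starRingEnd ℂ) (pwave lam m k z) :=
    (pwave_continuous lam m j).mul (Complex.continuous_conj.comp (pwave_continuous lam m k))
  have hR : Continuous fun z : ℂ => Complex.exp ((θ : ℂ) * Complex.I) * z :=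
    continuous_const.mul continuous_id
  set I₀ := ∫ z, pwave lam m j z * (starRingEnd ℂ) (pwave lam m k z) ∂ν with hI₀
  have key : I₀ = c * I₀ := by
    conv_lhs => rw [hI₀, ← hrot θ]
    rw [integral_map hR.aemeasurable hcont.aestronglyMeasurable]
    have hint : ∀ z : ℂ,
        pwave lam m j (Complex.exp ((θ : ℂ) * Complex.I) * z) *
          (starRingEnd ℂ) (pwave lam m k (Complex.exp ((θ : ℂ) * Complex.I) * z))
        = c * (pwave lam m j z * (starRingEnd ℂ) (pwave lam m k z)) := by
      intro z
      rw [pwave_rot, pwave_rot, map_mul]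
      have hconj : (starRingEnd ℂ) (Complex.exp (Complex.I * k * ((θ : ℝ) : ℂ)))
          = Complex.exp (-(Complex.I * k * ((θ : ℝ) : ℂ))) := by
        rw [← Complex.exp_conj]
        congr 1
        simp [map_mul, Complex.conj_I, Complex.conj_ofReal]
      rw [hconj]
      have hcc : Complex.exp (Complex.I * j * ((θ : ℝ) : ℂ)) *
          Complex.exp (-(Complex.I * k * ((θ : ℝ) : ℂ))) = c := by
        rw [← Complex.exp_add, hc]
        congr 1
        rw [phiAngle_int_mul, ← hθ]
        push_cast
        ring
      calc Complex.exp (Complex.I * j * ((θ:ℝ):ℂ)) * pwave lam m j z *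
            (Complex.exp (-(Complex.I * k * ((θ:ℝ):ℂ))) * (starRingEnd ℂ) (pwave lam m k z))
          = (Complex.exp (Complex.I * j * ((θ:ℝ):ℂ)) * Complex.exp (-(Complex.I * k * ((θ:ℝ):ℂ)))) *
            (pwave lam m j z * (starRingEnd ℂ) (pwave lam m k z)) := by ring
        _ = c * (pwave lam m j z * (starRingEnd ℂ) (pwave lam m k z)) := by rw [hcc]
    simp only [hint]
    rw [MeasureTheory.integral_const_mul]
  have hd : j - k ≠ 0 := sub_ne_zero.mpr hjk
  have hd2 : |j - k| ≤ 2 * (m:ℤ) := by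
    calc |j - k| ≤ |j| + |k| := abs_sub j k
      _ ≤ 2 * m := by linarith
  have hc1 : c ≠ 1 := exp_phiAngle_ne_one m (j - k) hd hd2
  have h0 : (1 - c) * I₀ = 0 := by
    rw [sub_mul, one_mul, ← key]
    ring
  rcases mul_eq_zero.mp h0 with h | h
  · exact absurd (by linear_combination -h : c = 1) hc1
  · exact h

lemma pwave_expand (lam : ℝ) (m : ℕ) (j : ℤ) :
    pwave lam m j = (1 / (((2 * m + 1 : ℕ) : ℂ) * Complex.I ^ j)) •
      ∑ l ∈ Finset.Icc (-(m : ℤ)) (m : ℤ),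
        Complex.exp (Complex.I * j * ((phiAngle m l : ℝ) : ℂ)) •
          planeWaveFn lam (phiAngle m l) := by
  funext z
  simp only [pwave, Pi.smul_apply, Finset.sum_apply, smul_eq_mul]

lemma planeWaveFn_expand (lam : ℝ) (m : ℕ) (l' : ℤ) (hl'1 : -(m:ℤ) ≤ l') (hl'2 : l' ≤ (m:ℤ)) :
    planeWaveFn lam (phiAngle m l') =
      ∑ j ∈ Finset.Icc (-(m : ℤ)) (m : ℤ),
        (Complex.exp (-(Complex.I) * j * ((phiAngle m l' : ℝ) : ℂ)) * Complex.I ^ j) •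
          pwave lam m j := by
  have hN : ((2 * m + 1 : ℕ) : ℂ) ≠ 0 := Nat.cast_ne_zero.mpr (by omega)
  funext z
  simp only [Finset.sum_apply, Pi.smul_apply, smul_eq_mul]
  have step1 : ∀ j ∈ Finset.Icc (-(m : ℤ)) (m : ℤ),
      (Complex.exp (-(Complex.I) * j * ((phiAngle m l' : ℝ) : ℂ)) * Complex.I ^ j) *
        pwave lam m j z
      = (1 / ((2 * m + 1 : ℕ) : ℂ)) *
          ∑ l ∈ Finset.Icc (-(m : ℤ)) (m : ℤ),
            Complex.exp (Complex.I * j * ((phiAngle m (l - l') : ℝ) : ℂ)) *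
              planeWaveFn lam (phiAngle m l) z := by
    intro j _
    have hIj : (Complex.I : ℂ) ^ j ≠ 0 := zpow_ne_zero j Complex.I_ne_zero
    rw [pwave]
    conv_lhs => rw [Finset.mul_sum, Finset.mul_sum]
    conv_rhs => rw [Finset.mul_sum]
    apply Finset.sum_congr rfl
    intro l _
    have hexp : Complex.exp (Complex.I * j * ((phiAngle m (l - l') : ℝ) : ℂ))
        = Complex.exp (Complex.I * j * ((phiAngle m l : ℝ) : ℂ)) *
          Complex.exp (-(Complex.I) * j * ((phiAngle m l' : ℝ) : ℂ)) := by
      rw [← Complex.exp_add, phiAngle_sub]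
      congr 1
      push_cast
      ring
    rw [hexp]
    field_simp
  rw [Finset.sum_congr rfl step1, ← Finset.mul_sum, Finset.sum_comm]
  have step2 : ∀ l ∈ Finset.Icc (-(m : ℤ)) (m : ℤ),
      ∑ j ∈ Finset.Icc (-(m : ℤ)) (m : ℤ),
        Complex.exp (Complex.I * j * ((phiAngle m (l - l') : ℝ) : ℂ)) *
          planeWaveFn lam (phiAngle m l) z
      = (if l = l' then ((2 * m + 1 : ℕ) : ℂ) else 0) * planeWaveFn lam (phiAngle m l) z := by
    intro l hl
    rw [← Finset.sum_mul]
    congr 1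
    rw [Finset.mem_Icc] at hl
    have habs : |l - l'| ≤ 2 * (m:ℤ) := by
      calc |l - l'| ≤ |l| + |l'| := abs_sub l l'
        _ ≤ 2 * m := by
          have h1 : |l| ≤ (m:ℤ) := abs_le.mpr ⟨hl.1, hl.2⟩
          have h2 : |l'| ≤ (m:ℤ) := abs_le.mpr ⟨hl'1, hl'2⟩
          linarith
    rw [dft_full m (l - l') habs]
    congr 1
    simp [sub_eq_zero]
  rw [Finset.sum_congr rfl step2, Finset.sum_eq_single_of_mem l'
    (Finset.mem_Icc.mpr ⟨hl'1, hl'2⟩) (fun l _ hne => by rw [if_neg hne, zero_mul])]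
  rw [if_pos rfl]
  have hN' : (2 * (m:ℂ) + 1) ≠ 0 := by push_cast at hN; exact hN
  push_cast
  rw [one_div, inv_mul_cancel_left₀ hN']

/-- For any finite rotation-invariant Borel measure `ν` on the closed unit
disk (in particular any `ν_α`), the functions `b_j^m`, `j = -m,…,m`, are pairwise
orthogonal in `L²(Ω,ν)` and span the same space as the `2m+1` plane waves `e_{k_l}`. -/
theorem stmt_13 (lam : ℝ) (hlam : 0 < lam) (m : ℕ)
    (ν : Measure ℂ) [IsFiniteMeasure ν] (hsupp : ν (closedBall (0 : ℂ) 1)ᶜ = 0)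
    (hrot : RotationInvariant ν) :
    (∀ j k : ℤ, |j| ≤ (m : ℤ) → |k| ≤ (m : ℤ) → j ≠ k →
      (∫ z, pwave lam m j z * (starRingEnd ℂ) (pwave lam m k z) ∂ν) = 0) ∧
    Submodule.span ℂ ((fun j : ℤ => pwave lam m j) '' Set.Icc (-(m : ℤ)) (m : ℤ)) =
      Submodule.span ℂ
        ((fun l : ℤ => planeWaveFn lam (phiAngle m l)) '' Set.Icc (-(m : ℤ)) (m : ℤ)) := by
  constructor
  · intro j k hj hk hjk
    exact pwave_orth lam m ν hrot j k hj hk hjk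
  · apply le_antisymm
    · rw [Submodule.span_le]
      rintro _ ⟨j, hj, rfl⟩
      beta_reduce
      rw [pwave_expand]
      exact Submodule.smul_mem _ _ (Submodule.sum_mem _ fun l hl =>
        Submodule.smul_mem _ _ (Submodule.subset_span
          ⟨l, Set.mem_Icc.mpr (Finset.mem_Icc.mp hl), rfl⟩))
    · rw [Submodule.span_le]
      rintro _ ⟨l', hl', rfl⟩
      beta_reduce
      rw [planeWaveFn_expand lam m l' hl'.1 hl'.2]
      exact Submodule.sum_mem _ fun j hj =>
        Submodule.smul_mem _ _ (Submodule.subset_span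
          ⟨j, Set.mem_Icc.mpr (Finset.mem_Icc.mp hj), rfl⟩)
end
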